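/- Let U = [U₁ U₂] and A = UᵀU with blocks A₁₁ = U₁ᵀU₁ invertible. Suppose the cross approximation error satisfies ‖A − [A₁₁; A₂₁] A₁₁⁻¹ [A₁₁ A₁₂]‖₂ ≤ ε‖A‖₂ in spectral norm. Then there exists a matrix B such that ‖U − U₁Bᵀ‖₂ ≤ √ε · ‖U‖₂; specifically one may take Bᵀ = [I, A₁₁⁻¹A₁₂]. -/

import Mathlib

open Matrix

/-- Matrix spectral norm (largest singular value), as the operator norm
of the associated Euclidean linear map. -/
noncomputable def spec {m n : Type*} [Fintype m] [Fintype n] [DecidableEq n]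
    (M : Matrix m n ℝ) : ℝ :=
  ‖LinearMap.toContinuousLinearMap (Matrix.toEuclideanLin M)‖

/-- Matrix Frobenius norm. -/
noncomputable def frobM {m n : Type*} [Fintype m] [Fintype n] (A : Matrix m n ℝ) : ℝ :=
  Real.sqrt (∑ i, ∑ j, (A i j) ^ 2)

/-- Frobenius norm of a 3-tensor. -/
noncomputable def frob3 {n₁ n₂ n₃ : Type*} [Fintype n₁] [Fintype n₂] [Fintype n₃]
    (T : n₁ → n₂ → n₃ → ℝ) : ℝ :=
  Real.sqrt (∑ i, ∑ j, ∑ k, (T i j k) ^ 2)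

/-- Spectral norm of a 3-tensor: sup of the trilinear form over unit vectors. -/
noncomputable def tspec {n₁ n₂ n₃ : Type*} [Fintype n₁] [Fintype n₂] [Fintype n₃]
    (A : n₁ → n₂ → n₃ → ℝ) : ℝ :=
  sSup {x | ∃ (u : n₁ → ℝ) (v : n₂ → ℝ) (w : n₃ → ℝ),
    (∑ i, (u i) ^ 2) = 1 ∧ (∑ j, (v j) ^ 2) = 1 ∧ (∑ k, (w k) ^ 2) = 1 ∧
    x = |∑ i, ∑ j, ∑ k, A i j k * u i * v j * w k|}

lemma toEuclideanLin_mul {m n p : Type*} [Fintype m] [Fintype n] [Fintype p]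
    [DecidableEq n] [DecidableEq p]
    (A : Matrix m n ℝ) (B : Matrix n p ℝ) :
    Matrix.toEuclideanLin (A * B) =
      (Matrix.toEuclideanLin A).comp (Matrix.toEuclideanLin B) := by
  ext v
  simp [Matrix.toEuclideanLin_apply, Matrix.mulVec_mulVec]

lemma spec_nonneg {m n : Type*} [Fintype m] [Fintype n] [DecidableEq n]
    (M : Matrix m n ℝ) : 0 ≤ spec M := norm_nonneg _

lemma spec_transpose_mul_self {m n : Type*} [Fintype m] [Fintype n] [DecidableEq m] [DecidableEq n]
    (M : Matrix m n ℝ) : spec (Mᵀ * M) = spec M ^ 2 := by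
  have hT : Mᵀ = Mᴴ := by ext i j; simp [Matrix.conjTranspose]
  rw [spec, toEuclideanLin_mul, hT, Matrix.toEuclideanLin_conjTranspose_eq_adjoint]
  have h1 : LinearMap.toContinuousLinearMap
      ((LinearMap.adjoint (Matrix.toEuclideanLin M)).comp (Matrix.toEuclideanLin M)) =
      (LinearMap.toContinuousLinearMap (LinearMap.adjoint (Matrix.toEuclideanLin M))) ∘L
        (LinearMap.toContinuousLinearMap (Matrix.toEuclideanLin M)) := by
    ext v; rfl
  rw [h1, LinearMap.adjoint_toContinuousLinearMap,
    ContinuousLinearMap.norm_adjoint_comp_self, spec, sq]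

lemma fromBlocks_sub' {m₁ m₂ n₁ n₂ : Type*}
    (A : Matrix m₁ n₁ ℝ) (B : Matrix m₁ n₂ ℝ) (C : Matrix m₂ n₁ ℝ) (D : Matrix m₂ n₂ ℝ)
    (A' : Matrix m₁ n₁ ℝ) (B' : Matrix m₁ n₂ ℝ) (C' : Matrix m₂ n₁ ℝ) (D' : Matrix m₂ n₂ ℝ) :
    fromBlocks A B C D - fromBlocks A' B' C' D' =
      fromBlocks (A - A') (B - B') (C - C') (D - D') := by
  ext (i | i) (j | j) <;> simp

theorem cross_approximation_of_gram_gives_low_rank_approximation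
    {n k₁ k₂ : ℕ}
    (U₁ : Matrix (Fin n) (Fin k₁) ℝ) (U₂ : Matrix (Fin n) (Fin k₂) ℝ)
    (ε : ℝ) (hε : 0 ≤ ε)
    (h11 : IsUnit (U₁ᵀ * U₁))
    (hcross : spec ((fromCols U₁ U₂)ᵀ * fromCols U₁ U₂ -
        fromRows (U₁ᵀ * U₁) (U₂ᵀ * U₁) * (U₁ᵀ * U₁)⁻¹ * fromCols (U₁ᵀ * U₁) (U₁ᵀ * U₂)) ≤
        ε * spec ((fromCols U₁ U₂)ᵀ * fromCols U₁ U₂)) :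
    ∃ B : Matrix (Fin k₁ ⊕ Fin k₂) (Fin k₁) ℝ,
      Bᵀ = fromCols (1 : Matrix (Fin k₁) (Fin k₁) ℝ) ((U₁ᵀ * U₁)⁻¹ * (U₁ᵀ * U₂)) ∧
      spec (fromCols U₁ U₂ - U₁ * Bᵀ) ≤ Real.sqrt ε * spec (fromCols U₁ U₂) := by
  classical
  set A11 : Matrix (Fin k₁) (Fin k₁) ℝ := U₁ᵀ * U₁ with hA11
  have hdet : IsUnit A11.det := (Matrix.isUnit_iff_isUnit_det _).mp h11
  have hmi : A11 * A11⁻¹ = 1 := Matrix.mul_nonsing_inv _ hdet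
  have him : A11⁻¹ * A11 = 1 := Matrix.nonsing_inv_mul _ hdet
  set W : Matrix (Fin k₁) (Fin k₂) ℝ := A11⁻¹ * (U₁ᵀ * U₂) with hW
  set V : Matrix (Fin n) (Fin k₂) ℝ := U₂ - U₁ * W with hV
  refine ⟨(fromCols 1 W)ᵀ, transpose_transpose _, ?_⟩
  rw [transpose_transpose]
  have hE : fromCols U₁ U₂ - U₁ * fromCols 1 W = fromCols 0 V := by
    rw [mul_fromCols, Matrix.mul_one]
    ext i (j | j) <;> simp [fromCols, hV]
  have hcol : U₁ᵀ * (U₁ * W) = U₁ᵀ * U₂ := by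
    rw [← Matrix.mul_assoc, ← hA11, hW, ← Matrix.mul_assoc, hmi, Matrix.one_mul]
  have hVtV : Vᵀ * V = U₂ᵀ * U₂ - U₂ᵀ * U₁ * A11⁻¹ * (U₁ᵀ * U₂) := by
    rw [hV, transpose_sub, transpose_mul, Matrix.sub_mul, Matrix.mul_sub, Matrix.mul_sub,
      Matrix.mul_assoc Wᵀ U₁ᵀ U₂, Matrix.mul_assoc Wᵀ U₁ᵀ (U₁ * W), hcol, sub_self, sub_zero,
      hW]
    simp [Matrix.mul_assoc]
  have hkey : (fromCols U₁ U₂)ᵀ * fromCols U₁ U₂ -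
      fromRows (U₁ᵀ * U₁) (U₂ᵀ * U₁) * (U₁ᵀ * U₁)⁻¹ * fromCols (U₁ᵀ * U₁) (U₁ᵀ * U₂) =
      (fromCols 0 V)ᵀ * fromCols 0 V := by
    rw [transpose_fromCols, fromRows_mul_fromCols, fromRows_mul,
      fromRows_mul_fromCols, transpose_fromCols, fromRows_mul_fromCols,
      ← hA11, fromBlocks_sub']
    have e11 : A11 - A11 * A11⁻¹ * A11 = 0 := by rw [hmi, Matrix.one_mul, sub_self]
    have e12 : U₁ᵀ * U₂ - A11 * A11⁻¹ * (U₁ᵀ * U₂) = 0 := by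
      rw [hmi, Matrix.one_mul, sub_self]
    have e21 : U₂ᵀ * U₁ - U₂ᵀ * U₁ * A11⁻¹ * A11 = 0 := by
      rw [Matrix.mul_assoc, him, Matrix.mul_one, sub_self]
    rw [e11, e12, e21, ← hVtV]
    rw [Matrix.transpose_zero, Matrix.zero_mul, Matrix.zero_mul, Matrix.mul_zero]
  simp only [hE]
  have h2 : spec (fromCols (0 : Matrix (Fin n) (Fin k₁) ℝ) V) ^ 2 ≤ ε * spec (fromCols U₁ U₂) ^ 2 := by
    rw [← spec_transpose_mul_self, ← spec_transpose_mul_self, ← hkey]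
    exact hcross
  have h3 := Real.sqrt_le_sqrt h2
  rwa [Real.sqrt_mul hε, Real.sqrt_sq (spec_nonneg _), Real.sqrt_sq (spec_nonneg _)] at h3
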